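/- Let Γ be a finite k-regular graph, neither complete nor null, with clique number equal to chromatic number and primitive automorphism group. Then Γ contains no two distinct vertices x, y with |N(x) ∪ N(y)| ≤ k+1. -/

import Mathlib

def IsPrimitivePermGroup {X : Type*} (G : Subgroup (Equiv.Perm X)) : Prop :=
  (∀ x y : X, ∃ g ∈ G, g x = y) ∧
  ∀ R : X → X → Prop, Equivalence R →
    (∀ g ∈ G, ∀ x y : X, R x y → R (g x) (g y)) →
    (∀ x y : X, R x y ↔ x = y) ∨ (∀ x y : X, R x y)

theorem stmt7 {X : Type*} [Fintype X] [DecidableEq X] (Γ : SimpleGraph X)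
    [DecidableRel Γ.Adj] (k : ℕ)
    (G : Subgroup (Equiv.Perm X))
    (hAut : ∀ g ∈ G, ∀ x y : X, Γ.Adj x y ↔ Γ.Adj (g x) (g y))
    (hPrim : IsPrimitivePermGroup G)
    (hreg : Γ.IsRegularOfDegree k)
    (hchrom : Γ.chromaticNumber = (Γ.cliqueNum : ℕ∞))
    (hEdge : ∃ x y : X, Γ.Adj x y)
    (hNonComplete : ∃ x y : X, x ≠ y ∧ ¬ Γ.Adj x y) :
    ∀ x y : X, x ≠ y →
      ¬ ((Γ.neighborFinset x ∪ Γ.neighborFinset y).card ≤ k + 1) := by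
  classical
  -- generic automorphism facts
  have hadj_inv : ∀ g ∈ G, ∀ u w : X, Γ.Adj (g u) w ↔ Γ.Adj u (g⁻¹ w) := by
    intro g hg u w
    have := hAut g hg u (g⁻¹ w)
    rw [show g (g⁻¹ w) = w from Equiv.apply_symm_apply g w] at this
    exact this.symm
  have heq_inv : ∀ (g : Equiv.Perm X) (u w : X), w = g u ↔ g⁻¹ w = u := by
    intro g u w
    constructor
    · rintro rfl; exact Equiv.symm_apply_apply g u
    · rintro rfl; exact (Equiv.apply_symm_apply g w).symm
  have memimg : ∀ (g : Equiv.Perm X) (K : Finset X) (u : X),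
      u ∈ K.image ⇑g⁻¹ ↔ g u ∈ K := by
    intro g K u
    simp only [Finset.mem_image]
    constructor
    · rintro ⟨w, hw, rfl⟩
      rwa [Equiv.Perm.coe_inv, Equiv.apply_symm_apply]
    · intro h
      exact ⟨g u, h, Equiv.symm_apply_apply g u⟩
  have imgclique : ∀ (n : ℕ) (g : Equiv.Perm X), g ∈ G → ∀ K : Finset X,
      Γ.IsNClique n K → Γ.IsNClique n (K.image ⇑g⁻¹) := by
    intro n g hg K hK
    constructor
    · intro p hp q hq hpq
      simp only [Finset.coe_image, Set.mem_image, Finset.mem_coe] at hp hq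
      obtain ⟨p', hp', rfl⟩ := hp
      obtain ⟨q', hq', rfl⟩ := hq
      have hne : p' ≠ q' := fun h => hpq (by rw [h])
      have hadj : Γ.Adj p' q' := hK.1 hp' hq' hne
      exact (hadj_inv g hg _ _).mp (by rwa [Equiv.Perm.coe_inv, Equiv.apply_symm_apply])
    · rw [Finset.card_image_of_injective K (Equiv.injective _)]
      exact hK.2
  intro x y hxy hcard
  have hNx : (Γ.neighborFinset x).card = k :=
    (Γ.card_neighborFinset_eq_degree x).trans (hreg x)
  have hNy : (Γ.neighborFinset y).card = k :=
    (Γ.card_neighborFinset_eq_degree y).trans (hreg y)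
  have hsd : (Γ.neighborFinset x \ Γ.neighborFinset y).card ≤ 1 := by
    have h1 := Finset.card_sdiff_add_card (Γ.neighborFinset x) (Γ.neighborFinset y)
    omega
  have hsd' : (Γ.neighborFinset y \ Γ.neighborFinset x).card ≤ 1 := by
    have h1 := Finset.card_sdiff_add_card (Γ.neighborFinset y) (Γ.neighborFinset x)
    rw [Finset.union_comm] at h1
    omega
  by_cases hadj : Γ.Adj x y
  · -- Adjacent case: closed twins
    have hNsub : ∀ w, Γ.Adj x w → w = y ∨ Γ.Adj y w := by
      intro w hw
      by_contra hc
      push_neg at hc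
      have hyy : y ∈ Γ.neighborFinset x \ Γ.neighborFinset y := by
        simp [SimpleGraph.mem_neighborFinset, hadj]
      have hww : w ∈ Γ.neighborFinset x \ Γ.neighborFinset y := by
        simp [SimpleGraph.mem_neighborFinset, hw, hc.2]
      have : 1 < (Γ.neighborFinset x \ Γ.neighborFinset y).card :=
        Finset.one_lt_card.mpr ⟨y, hyy, w, hww, fun h => hc.1 h.symm⟩
      omega
    have hNsub' : ∀ w, Γ.Adj y w → w = x ∨ Γ.Adj x w := by
      intro w hw
      by_contra hc
      push_neg at hc
      have hyy : x ∈ Γ.neighborFinset y \ Γ.neighborFinset x := by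
        simp [SimpleGraph.mem_neighborFinset, hadj.symm]
      have hww : w ∈ Γ.neighborFinset y \ Γ.neighborFinset x := by
        simp [SimpleGraph.mem_neighborFinset, hw, hc.2]
      have : 1 < (Γ.neighborFinset y \ Γ.neighborFinset x).card :=
        Finset.one_lt_card.mpr ⟨x, hyy, w, hww, fun h => hc.1 h.symm⟩
      omega
    set R : X → X → Prop := fun u v => ∀ w, (w = u ∨ Γ.Adj u w) ↔ (w = v ∨ Γ.Adj v w)
      with hR
    have hRequiv : Equivalence R :=
      ⟨fun u w => Iff.rfl, fun h w => (h w).symm, fun h1 h2 w => (h1 w).trans (h2 w)⟩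
    have hRinv : ∀ g ∈ G, ∀ u v : X, R u v → R (g u) (g v) := by
      intro g hg u v h w
      have key : ∀ u : X, (w = g u ∨ Γ.Adj (g u) w) ↔ (g⁻¹ w = u ∨ Γ.Adj u (g⁻¹ w)) := by
        intro u
        rw [heq_inv g u w, hadj_inv g hg u w]
      rw [key u, key v]
      exact h (g⁻¹ w)
    have hRxy : R x y := by
      intro w
      constructor
      · rintro (rfl | h)
        · exact Or.inr hadj.symm
        · exact hNsub w h
      · rintro (rfl | h)
        · exact Or.inr hadj
        · exact hNsub' w h
    rcases hPrim.2 R hRequiv hRinv with htriv | huniv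
    · exact hxy ((htriv x y).mp hRxy)
    · obtain ⟨u, v, huv, hnadj⟩ := hNonComplete
      have := (huniv u v) v
      rcases this.mpr (Or.inl rfl) with h | h
      · exact huv h.symm
      · exact hnadj h
  · -- Nonadjacent case
    rcases Nat.le_one_iff_eq_zero_or_eq_one.mp hsd with h0 | h1
    · -- open twins: N(x) = N(y)
      have hsub : Γ.neighborFinset x ⊆ Γ.neighborFinset y :=
        Finset.sdiff_eq_empty_iff_subset.mp (Finset.card_eq_zero.mp h0)
      have heq : Γ.neighborFinset x = Γ.neighborFinset y :=
        Finset.eq_of_subset_of_card_le hsub (by omega)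
      set R : X → X → Prop := fun u v => ∀ w, Γ.Adj u w ↔ Γ.Adj v w with hR
      have hRequiv : Equivalence R :=
        ⟨fun u w => Iff.rfl, fun h w => (h w).symm, fun h1 h2 w => (h1 w).trans (h2 w)⟩
      have hRinv : ∀ g ∈ G, ∀ u v : X, R u v → R (g u) (g v) := by
        intro g hg u v h w
        rw [hadj_inv g hg u w, hadj_inv g hg v w]
        exact h (g⁻¹ w)
      have hRxy : R x y := by
        intro w
        rw [← SimpleGraph.mem_neighborFinset, ← SimpleGraph.mem_neighborFinset, heq]
      rcases hPrim.2 R hRequiv hRinv with htriv | huniv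
      · exact hxy ((htriv x y).mp hRxy)
      · obtain ⟨u, v, huv⟩ := hEdge
        exact Γ.irrefl ((huniv u v v).mp huv)
    · -- |N(x) \ N(y)| = 1
      obtain ⟨a, ha⟩ := Finset.card_eq_one.mp h1
      have hamem : a ∈ Γ.neighborFinset x \ Γ.neighborFinset y := by rw [ha]; simp
      have hxa : Γ.Adj x a := by
        have := Finset.mem_sdiff.mp hamem
        exact (SimpleGraph.mem_neighborFinset _ _ _).mp this.1
      have hya : ¬ Γ.Adj y a := by
        have := Finset.mem_sdiff.mp hamem
        intro h
        exact this.2 ((SimpleGraph.mem_neighborFinset _ _ _).mpr h)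
      have hC : ∀ w, Γ.Adj x w → w ≠ a → Γ.Adj y w := by
        intro w hw hwa
        by_contra hc
        have : w ∈ Γ.neighborFinset x \ Γ.neighborFinset y := by
          simp [SimpleGraph.mem_neighborFinset, hw, hc]
        rw [ha, Finset.mem_singleton] at this
        exact hwa this
      set ω := Γ.cliqueNum with hω
      have hcol : Γ.Colorable ω :=
        SimpleGraph.chromaticNumber_le_iff_colorable.mp (le_of_eq hchrom)
      obtain ⟨C⟩ := hcol
      -- Step A: find a proper ω-coloring separating x and y
      have hsep : ∃ f : X → Fin ω, (∀ p q, Γ.Adj p q → f p ≠ f q) ∧ f x ≠ f y := by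
        set R : X → X → Prop := fun u v =>
          ∀ f : X → Fin ω, (∀ p q, Γ.Adj p q → f p ≠ f q) → f u = f v with hR
        have hRequiv : Equivalence R :=
          ⟨fun u f hf => rfl, fun h f hf => (h f hf).symm,
           fun h1 h2 f hf => (h1 f hf).trans (h2 f hf)⟩
        have hRinv : ∀ g ∈ G, ∀ u v : X, R u v → R (g u) (g v) := by
          intro g hg u v h f hf
          exact h (f ∘ g) (fun p q hpq => hf _ _ ((hAut g hg p q).mp hpq))
        rcases hPrim.2 R hRequiv hRinv with htriv | huniv
        · by_contra hc
          push_neg at hc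
          exact hxy ((htriv x y).mp hc)
        · obtain ⟨u, v, huv⟩ := hEdge
          exact absurd (huniv u v (⇑C) (fun p q h => C.valid h)) (C.valid huv)
      obtain ⟨f, hf, hfxy⟩ := hsep
      -- Step B: every ω-clique containing x contains a
      have key : ∀ K : Finset X, Γ.IsNClique ω K → x ∈ K → a ∈ K := by
        intro K hK hxK
        have hinj : Set.InjOn f ↑K := by
          intro p hp q hq hpq
          by_contra hne
          exact hf p q (hK.1 hp hq hne) hpq
        have himg : K.image f = Finset.univ := by
          apply Finset.eq_univ_of_card
          rw [Finset.card_image_of_injOn hinj, hK.2, Fintype.card_fin]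
        have : f y ∈ K.image f := himg ▸ Finset.mem_univ _
        obtain ⟨w, hwK, hwf⟩ := Finset.mem_image.mp this
        have hwx : w ≠ x := fun h => hfxy (by rw [← h, hwf])
        have hadjxw : Γ.Adj x w := hK.1 hxK hwK (Ne.symm hwx)
        have hwa : w = a := by
          by_contra hwa
          exact hf y w (hC w hadjxw hwa) hwf.symm
        exact hwa ▸ hwK
      -- Step C: counting max cliques through x and a
      obtain ⟨g, hg, hgx⟩ := hPrim.1 x a
      have hgax : (g⁻¹ : Equiv.Perm X) a = x := by
        rw [← hgx]; exact Equiv.symm_apply_apply g x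
      set A : Finset (Finset X) :=
        Finset.univ.filter (fun K => Γ.IsNClique ω K ∧ x ∈ K) with hA
      set B : Finset (Finset X) :=
        Finset.univ.filter (fun K => Γ.IsNClique ω K ∧ a ∈ K) with hB
      have hAB : A ⊆ B := by
        intro K hK
        simp only [hA, hB, Finset.mem_filter, Finset.mem_univ, true_and] at *
        exact ⟨hK.1, key K hK.1 hK.2⟩
      have hBimg : B.image (fun K => K.image ⇑g⁻¹) ⊆ A := by
        intro K' hK'
        obtain ⟨K, hK, rfl⟩ := Finset.mem_image.mp hK'
        simp only [hA, hB, Finset.mem_filter, Finset.mem_univ, true_and] at *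
        refine ⟨imgclique ω g hg K hK.1, ?_⟩
        rw [← hgax]
        exact Finset.mem_image_of_mem _ hK.2
      have hcardBA : B.card ≤ A.card := by
        have hinj : Function.Injective (fun K : Finset X => K.image ⇑g⁻¹) :=
          Finset.image_injective (Equiv.injective _)
        calc B.card = (B.image (fun K => K.image ⇑g⁻¹)).card :=
              (Finset.card_image_of_injective B hinj).symm
          _ ≤ A.card := Finset.card_le_card hBimg
      have hABeq : A = B := Finset.eq_of_subset_of_card_le hAB hcardBA
      have keyrev : ∀ K : Finset X, Γ.IsNClique ω K → a ∈ K → x ∈ K := by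
        intro K h1 h2
        have : K ∈ B := by
          simp only [hB, Finset.mem_filter, Finset.mem_univ, true_and]
          exact ⟨h1, h2⟩
        rw [← hABeq] at this
        simp only [hA, Finset.mem_filter, Finset.mem_univ, true_and] at this
        exact this.2
      -- Step D: primitivity on the "same max cliques" relation
      set R : X → X → Prop := fun u v =>
        ∀ K : Finset X, Γ.IsNClique ω K → (u ∈ K ↔ v ∈ K) with hRdef
      have hRequiv : Equivalence R :=
        ⟨fun u K hK => Iff.rfl, fun h K hK => (h K hK).symm,
         fun h1 h2 K hK => (h1 K hK).trans (h2 K hK)⟩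
      have hRinv : ∀ g' ∈ G, ∀ u v : X, R u v → R (g' u) (g' v) := by
        intro g' hg' u v h K hK
        have hK' : Γ.IsNClique ω (K.image ⇑g'⁻¹) := imgclique ω g' hg' K hK
        have h' := h _ hK'
        rw [memimg g' K u, memimg g' K v] at h'
        exact h'
      have hRxa : R x a := fun K hK => ⟨key K hK, keyrev K hK⟩
      rcases hPrim.2 R hRequiv hRinv with htriv | huniv
      · exact Γ.ne_of_adj hxa ((htriv x a).mp hRxa)
      · obtain ⟨u, v, huv, hnadj⟩ := hNonComplete
        obtain ⟨K₀, hK₀⟩ := Γ.exists_isNClique_cliqueNum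
        obtain ⟨p, q, hpq⟩ := hEdge
        have hclq : Γ.IsClique ({p, q} : Finset X) := by
          rw [SimpleGraph.isClique_iff]
          intro s hs t ht hst
          simp only [Finset.coe_insert, Set.mem_insert_iff, Finset.coe_singleton,
            Set.mem_singleton_iff] at hs ht
          rcases hs with rfl | rfl <;> rcases ht with rfl | rfl
          · exact absurd rfl hst
          · exact hpq
          · exact hpq.symm
          · exact absurd rfl hst
        have hω2 : 2 ≤ ω := by
          have hcard2 : ({p, q} : Finset X).card = 2 :=
            Finset.card_pair (Γ.ne_of_adj hpq)
          have := SimpleGraph.IsClique.card_le_cliqueNum (tc := hclq)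
          omega
        have hne : K₀.Nonempty := Finset.card_pos.mp (by rw [hK₀.2]; omega)
        obtain ⟨w, hw⟩ := hne
        have hu : u ∈ K₀ := (huniv u w K₀ hK₀).mpr hw
        have hv : v ∈ K₀ := (huniv v w K₀ hK₀).mpr hw
        exact hnadj (hK₀.1 hu hv huv)
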